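/- There exist T₀ > 0, α > 0, C > 0 such that for all T ≥ T₀ and B ∈ (-1/(3T), 1/(3T)), the positive normalized groundstate u_B^{T} of the weighted Robin operator H_B^{T} satisfies the Agmon decay estimate ‖e^{ατ} u_B^{T}‖_{L²((0,T);(1-Bτ)dτ)} ≤ C. -/

import Mathlib

open Real Set MeasureTheory

section Aux
open Filter Topology

lemma barrier_ge {g G : ℝ → ℝ} {a b : ℝ}
    (hg : ∀ t ∈ Set.Icc a b, HasDerivAt g (G t) t)
    (h0 : 0 ≤ g a)
    (hz : ∀ t ∈ Set.Icc a b, g t = 0 → 0 < G t) :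
    ∀ t ∈ Set.Icc a b, 0 ≤ g t := by
  by_contra hcon
  push_neg at hcon
  obtain ⟨t₁, ht₁, hneg⟩ := hcon
  set S : Set ℝ := {t | t ∈ Set.Icc a t₁ ∧ 0 ≤ g t} with hSdef
  have haS : a ∈ S := ⟨⟨le_refl a, ht₁.1⟩, h0⟩
  have hbdd : BddAbove S := ⟨t₁, fun x hx => hx.1.2⟩
  set s := sSup S with hs
  have hsmem : s ∈ Set.Icc a t₁ := by
    constructor
    · exact le_csSup hbdd haS
    · exact csSup_le ⟨a, haS⟩ fun x hx => hx.1.2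
  have hsub : Set.Icc a t₁ ⊆ Set.Icc a b := Set.Icc_subset_Icc le_rfl ht₁.2
  have hsb : s ∈ Set.Icc a b := hsub hsmem
  have hclos : s ∈ closure S := csSup_mem_closure ⟨a, haS⟩ hbdd
  have hgs_nonneg : 0 ≤ g s := by
    haveI hne : (𝓝[S] s).NeBot := mem_closure_iff_nhdsWithin_neBot.1 hclos
    refine ge_of_tendsto ((hg s hsb).continuousAt.continuousWithinAt : ContinuousWithinAt g S s) ?_
    exact eventually_mem_nhdsWithin.mono fun x hx => hx.2
  have hst₁ : s < t₁ := by
    rcases lt_or_eq_of_le hsmem.2 with h | h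
    · exact h
    · exfalso; rw [h] at hgs_nonneg; linarith
  have hIoc : ∀ t ∈ Set.Ioc s t₁, g t < 0 := by
    intro t ht
    by_contra hge
    push_neg at hge
    have : t ∈ S := ⟨⟨le_trans hsmem.1 ht.1.le, ht.2⟩, hge⟩
    exact absurd (le_csSup hbdd this) (not_le.mpr ht.1)
  have hgs_nonpos : g s ≤ 0 := by
    refine le_of_tendsto (((hg s hsb).continuousAt).tendsto.mono_left (nhdsWithin_le_nhds : 𝓝[>] s ≤ 𝓝 s)) ?_
    filter_upwards [Ioc_mem_nhdsGT_of_mem (⟨le_refl s, hst₁⟩ : s ∈ Set.Ico s t₁)] with x hx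
    exact (hIoc x hx).le
  have hgs : g s = 0 := le_antisymm hgs_nonpos hgs_nonneg
  have hGs : 0 < G s := hz s hsb hgs
  have hslope : Tendsto (slope g s) (𝓝[>] s) (𝓝 (G s)) :=
    (hasDerivAt_iff_tendsto_slope.1 (hg s hsb)).mono_left
      (nhdsWithin_mono s fun x hx => Set.mem_compl_singleton_iff.2 (ne_of_gt hx))
  have : G s ≤ 0 := by
    refine le_of_tendsto hslope ?_
    filter_upwards [Ioc_mem_nhdsGT_of_mem (⟨le_refl s, hst₁⟩ : s ∈ Set.Ico s t₁)] with x hx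
    have hgx : g x < 0 := hIoc x hx
    have : slope g s x = g x / (x - s) := by
      rw [slope_def_field]; rw [hgs]; ring_nf
    rw [this]
    exact le_of_lt (div_neg_of_neg_of_pos hgx (by linarith [hx.1]))
  linarith

lemma barrier_le {g G : ℝ → ℝ} {a b : ℝ}
    (hg : ∀ t ∈ Set.Icc a b, HasDerivAt g (G t) t)
    (h0 : g a ≤ 0)
    (hz : ∀ t ∈ Set.Icc a b, g t = 0 → G t < 0) :
    ∀ t ∈ Set.Icc a b, g t ≤ 0 := by
  have := barrier_ge (g := fun t => -g t) (G := fun t => -G t)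
    (fun t ht => (hg t ht).neg) (by simpa using h0)
    (fun t ht h => by
      have : g t = 0 := by simpa [neg_eq_zero] using h
      simpa using (hz t ht this))
  intro t ht
  have := this t ht
  simpa using this

lemma barrier_ge_far {g G : ℝ → ℝ} {a b c m : ℝ}
    (hg : ∀ t ∈ Set.Icc a b, HasDerivAt g (G t) t)
    (h0 : c ≤ g a) (hc : 0 < c) (hm0 : 0 ≤ m)
    (hlow : ∀ t ∈ Set.Icc a b, (∀ s ∈ Set.Icc a t, 0 ≤ g s) → -m ≤ G t)
    (hsmall : m * (b - a) < c) :
    ∀ t ∈ Set.Icc a b, 0 ≤ g t := by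
  by_contra hcon
  push_neg at hcon
  obtain ⟨t₁, ht₁, hneg⟩ := hcon
  set S : Set ℝ := {t | t ∈ Set.Icc a t₁ ∧ g t ≤ 0} with hSdef
  have ht₁S : t₁ ∈ S := ⟨⟨ht₁.1, le_refl t₁⟩, hneg.le⟩
  have hbdd : BddBelow S := ⟨a, fun x hx => hx.1.1⟩
  set s := sInf S with hs
  have hsmem : s ∈ Set.Icc a t₁ := ⟨le_csInf ⟨t₁, ht₁S⟩ fun x hx => hx.1.1, csInf_le hbdd ht₁S⟩
  have hsub : Set.Icc a t₁ ⊆ Set.Icc a b := Set.Icc_subset_Icc le_rfl ht₁.2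
  have hsb : s ∈ Set.Icc a b := hsub hsmem
  have hclos : s ∈ closure S := csInf_mem_closure ⟨t₁, ht₁S⟩ hbdd
  have hgs_nonpos : g s ≤ 0 := by
    haveI : (𝓝[S] s).NeBot := mem_closure_iff_nhdsWithin_neBot.1 hclos
    refine le_of_tendsto ((hg s hsb).continuousAt.continuousWithinAt : ContinuousWithinAt g S s) ?_
    exact eventually_mem_nhdsWithin.mono fun x hx => hx.2
  have has : a < s := by
    rcases lt_or_eq_of_le hsmem.1 with h | h
    · exact h
    · exfalso; rw [← h] at hgs_nonpos; linarith
  have hIco : ∀ t ∈ Set.Ico a s, 0 < g t := by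
    intro t ht
    by_contra hle
    push_neg at hle
    have : t ∈ S := ⟨⟨ht.1, le_trans ht.2.le hsmem.2⟩, hle⟩
    exact absurd (csInf_le hbdd this) (not_le.mpr ht.2)
  have hgs_nonneg : 0 ≤ g s := by
    refine ge_of_tendsto (((hg s hsb).continuousAt).tendsto.mono_left (nhdsWithin_le_nhds : 𝓝[<] s ≤ 𝓝 s)) ?_
    filter_upwards [Ico_mem_nhdsLT_of_mem (⟨has, le_refl s⟩ : s ∈ Set.Ioc a s)] with x hx
    exact (hIco x hx).le
  have hgs : g s = 0 := le_antisymm hgs_nonpos hgs_nonneg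
  have hnng : ∀ x ∈ Set.Icc a s, 0 ≤ g x := by
    intro x hx
    rcases lt_or_eq_of_le hx.2 with h | h
    · exact (hIco x ⟨hx.1, h⟩).le
    · rw [h, hgs]
  have hΦ : ∀ x ∈ Set.Icc a s, HasDerivAt (fun t => g t + m * t) (G x + m) x := by
    intro x hx
    exact ((hg x (⟨hx.1, le_trans hx.2 hsb.2⟩)).add ((hasDerivAt_id x).const_mul m)).congr_deriv (by ring)
  have hmono : MonotoneOn (fun t => g t + m * t) (Set.Icc a s) := by
    apply monotoneOn_of_deriv_nonneg (convex_Icc a s)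
    · exact fun x hx => ((hΦ x hx).continuousAt).continuousWithinAt
    · intro x hx
      rw [interior_Icc] at hx
      exact ((hΦ x (Set.Ioo_subset_Icc_self hx)).differentiableAt).differentiableWithinAt
    · intro x hx
      rw [interior_Icc] at hx
      rw [(hΦ x (Set.Ioo_subset_Icc_self hx)).deriv]
      have hxb : x ∈ Set.Icc a b := ⟨hx.1.le, le_trans hx.2.le hsb.2⟩
      have := hlow x hxb (fun y hy => hnng y ⟨hy.1, le_trans hy.2 hx.2.le⟩)
      linarith
  have hfin := hmono (⟨le_refl a, hsmem.1⟩ : a ∈ Set.Icc a s) (⟨hsmem.1, le_refl s⟩ : s ∈ Set.Icc a s) hsmem.1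
  simp only [hgs] at hfin
  have hsba : s ≤ b := hsb.2
  nlinarith [mul_le_mul_of_nonneg_left (sub_le_sub_right hsba a) hm0]

end Aux

/-- `lam` is an eigenvalue of the weighted Robin operator
`H_B^{T} = -∂²_τ + B(1-Bτ)⁻¹∂_τ` on `(0,T)` with `u'(0) = -u(0)`, `u(T) = 0`. -/
def IsWeightedRobinEigenvalue (B T lam : ℝ) : Prop :=
  ∃ u : ℝ → ℝ, ContDiff ℝ 2 u ∧ (∃ τ ∈ Icc (0:ℝ) T, u τ ≠ 0) ∧
    deriv u 0 = - u 0 ∧ u T = 0 ∧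
    ∀ τ ∈ Icc (0:ℝ) T,
      - deriv (deriv u) τ + B * (1 - B*τ)⁻¹ * deriv u τ = lam * u τ

set_option maxHeartbeats 1000000 in
/-- Agmon decay of the positive normalized groundstate `u_B^{T}`:
`‖e^{ατ} u_B^{T}‖_{L²((0,T);(1-Bτ)dτ)} ≤ C` uniformly in `T ≥ T₀`, `|B| < 1/(3T)`. -/
theorem stmt9 (lam1 : ℝ → ℝ → ℝ)
    (hmin : ∀ B T, 0 < T → |B| * T < 1/3 →
      IsWeightedRobinEigenvalue B T (lam1 B T) ∧
      ∀ l, IsWeightedRobinEigenvalue B T l → lam1 B T ≤ l) :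
    ∃ T₀ > (0:ℝ), ∃ α > (0:ℝ), ∃ C > (0:ℝ), ∀ T ≥ T₀, ∀ B ∈ Ioo (-(1/(3*T))) (1/(3*T)),
      ∀ u : ℝ → ℝ, ContDiff ℝ 2 u →
        (∀ τ ∈ Ico (0:ℝ) T, 0 < u τ) →
        deriv u 0 = - u 0 → u T = 0 →
        (∀ τ ∈ Icc (0:ℝ) T,
          - deriv (deriv u) τ + B * (1 - B*τ)⁻¹ * deriv u τ = lam1 B T * u τ) →
        (∫ τ in (0:ℝ)..T, (u τ)^2 * (1 - B*τ)) = 1 →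
        Real.sqrt (∫ τ in (0:ℝ)..T, Real.exp (2*α*τ) * (u τ)^2 * (1 - B*τ)) ≤ C := by
  refine ⟨300, by norm_num, 1/4, by norm_num, Real.exp 60, Real.exp_pos 60, ?_⟩
  intro T hT B hB u hu2 hpos hRob huT heq hnorm
  obtain ⟨lam, hlamdef⟩ : ∃ l : ℝ, l = lam1 B T := ⟨lam1 B T, rfl⟩
  rw [← hlamdef] at heq
  have hT0 : (0:ℝ) < T := by linarith
  -- basic bounds on B and the weight
  have hBabs : |B| < 1/(3*T) := abs_lt.mpr ⟨hB.1, hB.2⟩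
  have hBT : |B| * T < 1/3 := by
    have := mul_lt_mul_of_pos_right hBabs hT0
    rw [div_mul_eq_mul_div, one_mul] at this
    calc |B| * T < T / (3*T) := this
    _ = 1/3 := by field_simp
  have hB900 : |B| ≤ 1/900 := by
    have h1 : 1/(3*T) ≤ 1/900 := by
      apply one_div_le_one_div_of_le (by norm_num)
      linarith
    linarith
  have hwlb : ∀ t ∈ Icc (0:ℝ) T, 2/3 ≤ 1 - B*t := by
    intro t ht
    have h1 : |B*t| ≤ |B| * T := by
      rw [abs_mul, abs_of_nonneg ht.1]
      exact mul_le_mul_of_nonneg_left ht.2 (abs_nonneg B)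
    have := (abs_le.1 h1).2
    linarith
  have hwub : ∀ t ∈ Icc (0:ℝ) T, 1 - B*t ≤ 4/3 := by
    intro t ht
    have h1 : |B*t| ≤ |B| * T := by
      rw [abs_mul, abs_of_nonneg ht.1]
      exact mul_le_mul_of_nonneg_left ht.2 (abs_nonneg B)
    have := (abs_le.1 h1).1
    linarith
  have hwne : ∀ t ∈ Icc (0:ℝ) T, (1 - B*t) ≠ 0 := fun t ht => by
    have := hwlb t ht; positivity
  have hBw : ∀ t ∈ Icc (0:ℝ) T, |B * (1-B*t)⁻¹| ≤ 1/600 := by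
    intro t ht
    rw [abs_mul]
    have h2 : (0:ℝ) < 1 - B*t := lt_of_lt_of_le (by norm_num) (hwlb t ht)
    have h3 : |(1-B*t)⁻¹| = (1-B*t)⁻¹ := abs_of_pos (by positivity)
    rw [h3]
    have h4 : (1-B*t)⁻¹ ≤ 3/2 := by
      rw [inv_le_comm₀ h2 (by norm_num)] -- (1-Bt)⁻¹ ≤ 3/2 ↔ 2/3 ≤ 1-Bt
      linarith [hwlb t ht]
    calc |B| * (1-B*t)⁻¹ ≤ (1/900) * (3/2) :=
          mul_le_mul hB900 h4 (by positivity) (by norm_num)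
      _ = 1/600 := by norm_num
  -- differentiability
  have hd1 : Differentiable ℝ u := hu2.differentiable (by norm_num)
  have hcd1 : ContDiff ℝ 1 (deriv u) := by
    have h2 : ContDiff ℝ (1+1 : ℕ) u := by exact_mod_cast hu2
    exact (contDiff_succ_iff_deriv.mp (by exact_mod_cast h2)).2.2
  have hd2 : Differentiable ℝ (deriv u) := hcd1.differentiable (by norm_num)
  have hcont : Continuous u := hd1.continuous
  have hu'' : ∀ t ∈ Icc (0:ℝ) T,
      deriv (deriv u) t = B*(1-B*t)⁻¹ * deriv u t - lam * u t := by
    intro t ht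
    have := heq t ht
    linarith
  have hu0 : 0 < u 0 := hpos 0 ⟨le_refl 0, hT0⟩
  have hunn : ∀ t ∈ Icc (0:ℝ) T, 0 ≤ u t := by
    intro t ht
    rcases lt_or_eq_of_le ht.2 with h | h
    · exact (hpos t ⟨ht.1, h⟩).le
    · rw [h, huT]
  -- derivative of q t = (1-B*t) * deriv u t
  have hq : ∀ t ∈ Icc (0:ℝ) T,
      HasDerivAt (fun t => (1-B*t) * deriv u t) (-lam * ((1-B*t) * u t)) t := by
    intro t ht
    have h1 : HasDerivAt (fun t : ℝ => 1 - B*t) (-B) t := by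
      simpa using ((hasDerivAt_id t).const_mul B).const_sub 1
    have h2 := h1.mul ((hd2 t).hasDerivAt)
    refine h2.congr_deriv ?_
    rw [hu'' t ht]
    field_simp [hwne t ht]
    ring
  have hqderiv : ∀ t ∈ Icc (0:ℝ) T,
      deriv (fun t => (1-B*t) * deriv u t) t = -lam * ((1-B*t) * u t) :=
    fun t ht => (hq t ht).deriv
  have hqcont : Continuous (fun t => (1-B*t) * deriv u t) := by
    exact ((continuous_const.sub (continuous_const.mul continuous_id)).mul hd2.continuous)
  have hqdiff : Differentiable ℝ (fun t => (1-B*t) * deriv u t) := by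
    exact ((differentiable_const 1).sub ((differentiable_id).const_mul B)).mul hd2
  -- lam < 0
  have hlamneg : lam < 0 := by
    by_contra hcon
    push_neg at hcon
    have hanti : AntitoneOn (fun t => (1-B*t) * deriv u t) (Icc (0:ℝ) T) := by
      apply antitoneOn_of_deriv_nonpos (convex_Icc 0 T) (hqcont.continuousOn)
        (hqdiff.differentiableOn)
      intro x hx
      rw [interior_Icc] at hx
      have hx' : x ∈ Icc (0:ℝ) T := Ioo_subset_Icc_self hx
      rw [hqderiv x hx']
      have h1 : 0 ≤ (1-B*x) * u x :=
        mul_nonneg (by linarith [hwlb x hx']) (hunn x hx')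
      nlinarith
    have hq0 : (fun t => (1-B*t) * deriv u t) 0 = -u 0 := by simp [hRob]
    have hkey : ∀ t ∈ Icc (0:ℝ) (2:ℝ), deriv u t ≤ -(3/4) * u 0 := by
      intro t ht
      have htT : t ∈ Icc (0:ℝ) T := ⟨ht.1, by linarith [ht.2]⟩
      have h1 : (1-B*t) * deriv u t ≤ -u 0 := by
        have := hanti (⟨le_refl 0, hT0.le⟩ : (0:ℝ) ∈ Icc (0:ℝ) T) htT ht.1
        rw [hq0] at this
        exact this
      have h2 : 2/3 ≤ 1-B*t := hwlb t htT
      have h3 : 1-B*t ≤ 4/3 := hwub t htT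
      nlinarith [hu0]
    have hphi : AntitoneOn (fun t => u t + (3/4) * u 0 * t) (Icc (0:ℝ) (2:ℝ)) := by
      apply antitoneOn_of_deriv_nonpos (convex_Icc 0 2)
      · exact (hcont.add (continuous_const.mul continuous_id)).continuousOn
      · exact (hd1.add ((differentiable_id).const_mul _)).differentiableOn
      · intro x hx
        rw [interior_Icc] at hx
        have hder : deriv (fun t => u t + (3/4) * u 0 * t) x = deriv u x + (3/4) * u 0 := by
          have := ((hd1 x).hasDerivAt.add (((hasDerivAt_id x)).const_mul ((3/4) * u 0)))
          exact this.deriv.trans (by ring)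
        rw [hder]
        have := hkey x (Ioo_subset_Icc_self hx)
        linarith
    have h2 := hphi (⟨le_refl 0, by norm_num⟩ : (0:ℝ) ∈ Icc (0:ℝ) 2)
      (⟨by norm_num, le_refl 2⟩ : (2:ℝ) ∈ Icc (0:ℝ) 2) (by norm_num)
    simp only at h2
    have h3 : 0 < u 2 := hpos 2 ⟨by norm_num, by linarith⟩
    nlinarith [hu0]
  -- q < 0 on [0,T)
  have hqmono : MonotoneOn (fun t => (1-B*t) * deriv u t) (Icc (0:ℝ) T) := by
    apply monotoneOn_of_deriv_nonneg (convex_Icc 0 T) (hqcont.continuousOn)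
      (hqdiff.differentiableOn)
    intro x hx
    rw [interior_Icc] at hx
    have hx' : x ∈ Icc (0:ℝ) T := Ioo_subset_Icc_self hx
    rw [hqderiv x hx']
    have h1 : 0 ≤ (1-B*x) * u x :=
      mul_nonneg (by linarith [hwlb x hx']) (hunn x hx')
    nlinarith
  have hu'neg : ∀ t ∈ Ico (0:ℝ) T, deriv u t < 0 := by
    intro t₀ ht₀
    have ht₀T : t₀ ∈ Icc (0:ℝ) T := ⟨ht₀.1, ht₀.2.le⟩
    by_contra hcon
    push_neg at hcon
    have hq₀ : 0 ≤ (1-B*t₀) * deriv u t₀ :=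
      mul_nonneg (by linarith [hwlb t₀ ht₀T]) hcon
    have humono : MonotoneOn u (Icc t₀ T) := by
      apply monotoneOn_of_deriv_nonneg (convex_Icc t₀ T) (hcont.continuousOn)
        (hd1.differentiableOn)
      intro x hx
      rw [interior_Icc] at hx
      have hxT : x ∈ Icc (0:ℝ) T := ⟨le_trans ht₀.1 hx.1.le, hx.2.le⟩
      have h1 : (1-B*t₀) * deriv u t₀ ≤ (1-B*x) * deriv u x :=
        hqmono ht₀T hxT hx.1.le
      have h2 : 0 ≤ (1-B*x) * deriv u x := le_trans hq₀ h1
      have h3 : 0 < 1-B*x := by linarith [hwlb x hxT]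
      nlinarith
    have := humono (⟨le_refl t₀, ht₀.2.le⟩ : t₀ ∈ Icc t₀ T)
      (⟨ht₀.2.le, le_refl T⟩ : T ∈ Icc t₀ T) ht₀.2.le
    rw [huT] at this
    exact absurd this (not_le.mpr (hpos t₀ ht₀))
  have huanti : AntitoneOn u (Icc (0:ℝ) T) := by
    apply antitoneOn_of_deriv_nonpos (convex_Icc 0 T) (hcont.continuousOn)
      (hd1.differentiableOn)
    intro x hx
    rw [interior_Icc] at hx
    exact (hu'neg x ⟨hx.1.le, hx.2⟩).le
  -- lower bound on lam
  have hlamlb : -lam ≤ 51/50 := by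
    by_contra hcon
    push_neg at hcon
    have hbar := barrier_ge (a := 0) (b := 100)
      (g := fun t => deriv u t + (1 - t/100) * u t)
      (G := fun t => deriv (deriv u) t + (-(1/100) * u t + (1 - t/100) * deriv u t))
      (fun t ht => by
        have h1 : HasDerivAt (fun t : ℝ => 1 - t/100) (-(1/100)) t := by
          simpa using ((hasDerivAt_id t).div_const 100).const_sub 1
        exact ((hd2 t).hasDerivAt).add
          ((h1.mul ((hd1 t).hasDerivAt)).congr_deriv (by ring)))
      (by simp [hRob])
      ?_
    · have h100 : (100:ℝ) ∈ Icc (0:ℝ) 100 := ⟨by norm_num, le_refl _⟩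
      have := hbar 100 h100
      norm_num at this
      have := hu'neg 100 ⟨by norm_num, by linarith⟩
      linarith
    · intro t ht hg0
      have htT : t ∈ Icc (0:ℝ) T := ⟨ht.1, by linarith [ht.2]⟩
      have hx : 0 < u t := hpos t ⟨ht.1, by linarith [ht.2]⟩
      obtain ⟨e, he⟩ : ∃ e : ℝ, e = B * (1 - B*t)⁻¹ := ⟨_, rfl⟩
      have heb : |e| ≤ 1/600 := he ▸ hBw t htT
      obtain ⟨β, hβ⟩ : ∃ b : ℝ, b = 1 - t/100 := ⟨_, rfl⟩
      have hβ0 : 0 ≤ β := by rw [hβ]; linarith [ht.2]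
      have hβ1 : β ≤ 1 := by rw [hβ]; linarith [ht.1]
      have hder : deriv u t = -(β * u t) := by
        have h' : deriv u t + (1 - t/100) * u t = 0 := hg0
        rw [hβ]; linarith
      show 0 < deriv (deriv u) t + (-(1/100) * u t + (1 - t/100) * deriv u t)
      rw [hu'' t htT, hder, ← he, ← hβ]
      have he1 : -(1/600) ≤ e := by linarith [(abs_le.1 heb).1]
      have he2 : e ≤ 1/600 := (abs_le.1 heb).2
      have hfac : (0:ℝ) < (-lam) - 1/100 - β^2 - β * e := by
        nlinarith [mul_le_mul_of_nonneg_left he2 hβ0, mul_le_mul_of_nonneg_left hβ1 hβ0]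
      have : e * -(β * u t) - lam * u t + (-(1/100) * u t + β * -(β * u t))
          = u t * ((-lam) - 1/100 - β^2 - β * e) := by ring
      rw [this]
      positivity
  -- key decay differential inequality
  have hkey : ∀ t ∈ Icc (0:ℝ) (T - 101), deriv u t + u t / 2 ≤ 0 := by
    by_cases hc : -lam < 13/50
    · -- small |lam| : static barrier at 3/5
      have hbar := barrier_le (a := 0) (b := T - 101)
        (g := fun t => deriv u t + (3/5) * u t)
        (G := fun t => deriv (deriv u) t + (3/5) * deriv u t)
        (fun t ht => ((hd2 t).hasDerivAt).add (((hd1 t).hasDerivAt).const_mul (3/5)))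
        (by show deriv u 0 + (3/5) * u 0 ≤ 0; rw [hRob]; linarith)
        ?_
      · intro t ht
        have h1 : deriv u t + (3/5) * u t ≤ 0 := hbar t ht
        have htT : t ∈ Icc (0:ℝ) T := ⟨ht.1, by linarith [ht.2]⟩
        have h2 : 0 ≤ u t := hunn t htT
        linarith
      · intro t ht hg0
        have htT : t ∈ Icc (0:ℝ) T := ⟨ht.1, by linarith [ht.2]⟩
        have hx : 0 < u t := hpos t ⟨ht.1, by linarith [ht.2]⟩
        obtain ⟨e, he⟩ : ∃ e : ℝ, e = B * (1 - B*t)⁻¹ := ⟨_, rfl⟩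
        have heb : |e| ≤ 1/600 := he ▸ hBw t htT
        have he1 : -(1/600) ≤ e := by linarith [(abs_le.1 heb).1]
        have he2 : e ≤ 1/600 := (abs_le.1 heb).2
        have hder : deriv u t = -((3/5) * u t) := by
          have h' : deriv u t + (3/5) * u t = 0 := hg0
          linarith
        show deriv (deriv u) t + (3/5) * deriv u t < 0
        rw [hu'' t htT, hder, ← he]
        have hfac : (-lam) - 9/25 - (3/5) * e < 0 := by nlinarith
        have hrw : e * -((3/5) * u t) - lam * u t + (3/5) * -((3/5) * u t)
            = u t * ((-lam) - 9/25 - (3/5) * e) := by ring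
        rw [hrw]
        exact mul_neg_of_pos_of_neg hx hfac
    · -- large |lam| : travelling barrier
      push_neg at hc
      by_contra hcon
      push_neg at hcon
      obtain ⟨t₀, ht₀, hgt⟩ := hcon
      have hbar := barrier_ge (a := t₀) (b := t₀ + 100)
        (g := fun t => deriv u t + (1/2 - (t - t₀)/200) * u t)
        (G := fun t => deriv (deriv u) t
            + (-(1/200) * u t + (1/2 - (t - t₀)/200) * deriv u t))
        (fun t ht => by
          have h1 : HasDerivAt (fun t : ℝ => 1/2 - (t - t₀)/200) (-(1/200)) t := by
            have h2 : HasDerivAt (fun t : ℝ => t - t₀) 1 t := (hasDerivAt_id t).sub_const t₀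
            exact (h2.div_const 200).const_sub (1/2)
          exact ((hd2 t).hasDerivAt).add
            ((h1.mul ((hd1 t).hasDerivAt)).congr_deriv (by ring)))
        (by
          show 0 ≤ deriv u t₀ + (1/2 - (t₀ - t₀)/200) * u t₀
          have hz : t₀ - t₀ = (0:ℝ) := sub_self t₀
          rw [hz]
          norm_num
          linarith)
        ?_
      · have hend : 0 ≤ deriv u (t₀ + 100) + (1/2 - (t₀ + 100 - t₀)/200) * u (t₀ + 100) :=
          hbar (t₀ + 100) ⟨by linarith, le_refl _⟩
        have h1 : t₀ + 100 - t₀ = (100:ℝ) := by ring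
        rw [h1] at hend
        norm_num at hend
        have h2 := hu'neg (t₀ + 100) ⟨by linarith [ht₀.1], by linarith [ht₀.2]⟩
        linarith
      · intro t ht hg0
        have htT : t ∈ Icc (0:ℝ) T := ⟨by linarith [ht.1, ht₀.1], by linarith [ht.2, ht₀.2]⟩
        have hx : 0 < u t := hpos t ⟨htT.1, by linarith [ht.2, ht₀.2]⟩
        obtain ⟨e, he⟩ : ∃ e : ℝ, e = B * (1 - B*t)⁻¹ := ⟨_, rfl⟩
        have heb : |e| ≤ 1/600 := he ▸ hBw t htT
        have he1 : -(1/600) ≤ e := by linarith [(abs_le.1 heb).1]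
        have he2 : e ≤ 1/600 := (abs_le.1 heb).2
        obtain ⟨β, hβ⟩ : ∃ b : ℝ, b = 1/2 - (t - t₀)/200 := ⟨_, rfl⟩
        have hβ0 : 0 ≤ β := by rw [hβ]; linarith [ht.2]
        have hβ1 : β ≤ 1/2 := by rw [hβ]; linarith [ht.1]
        have hder : deriv u t = -(β * u t) := by
          have h' : deriv u t + (1/2 - (t - t₀)/200) * u t = 0 := hg0
          rw [hβ]; linarith
        show 0 < deriv (deriv u) t + (-(1/200) * u t + (1/2 - (t - t₀)/200) * deriv u t)
        rw [hu'' t htT, hder, ← he, ← hβ]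
        have hfac : (0:ℝ) < (-lam) - 1/200 - β^2 - β * e := by
          nlinarith [mul_le_mul_of_nonneg_left he2 hβ0, mul_le_mul_of_nonneg_left hβ1 hβ0]
        have hrw : e * -(β * u t) - lam * u t + (-(1/200) * u t + β * -(β * u t))
            = u t * ((-lam) - 1/200 - β^2 - β * e) := by ring
        rw [hrw]
        positivity
  -- pointwise exponential decay up to T - 101
  have hT101 : (0:ℝ) ≤ T - 101 := by linarith
  have hFder : ∀ x : ℝ, HasDerivAt (fun t => u t * Real.exp (t/2))
      ((deriv u x + u x / 2) * Real.exp (x/2)) x := by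
    intro x
    have h1 : HasDerivAt (fun t : ℝ => Real.exp (t/2)) (Real.exp (x/2) * (1/2)) x := by
      have h2 : HasDerivAt (fun t : ℝ => t/2) (1/2) x := (hasDerivAt_id x).div_const 2
      exact (Real.hasDerivAt_exp (x/2)).comp x h2
    exact (((hd1 x).hasDerivAt).mul h1).congr_deriv (by ring)
  have hdecay1 : ∀ t ∈ Icc (0:ℝ) (T - 101), u t * Real.exp (t/2) ≤ u 0 := by
    have hanti : AntitoneOn (fun t => u t * Real.exp (t/2)) (Icc (0:ℝ) (T - 101)) := by
      apply antitoneOn_of_deriv_nonpos (convex_Icc _ _)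
      · exact (hcont.mul (Real.continuous_exp.comp (continuous_id.div_const 2))).continuousOn
      · intro x hx
        exact ((hFder x).differentiableAt).differentiableWithinAt
      · intro x hx
        rw [interior_Icc] at hx
        rw [(hFder x).deriv]
        have h1 := hkey x (Ioo_subset_Icc_self hx)
        have h2 := Real.exp_pos (x/2)
        nlinarith
    intro t ht
    have := hanti (⟨le_refl 0, hT101⟩ : (0:ℝ) ∈ Icc (0:ℝ) (T-101)) ht ht.1
    simpa using this
  have hdecay : ∀ t ∈ Icc (0:ℝ) T, u t ≤ u 0 * Real.exp 51 * Real.exp (-(t/2)) := by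
    intro t ht
    by_cases hcase : t ≤ T - 101
    · have h1 := hdecay1 t ⟨ht.1, hcase⟩
      have h2 : 0 < Real.exp (t/2) := Real.exp_pos _
      have h3 : u t ≤ u 0 * Real.exp (-(t/2)) := by
        rw [Real.exp_neg, ← div_eq_mul_inv, le_div_iff₀ h2]
        exact h1
      have h4 : (1:ℝ) ≤ Real.exp 51 := by
        rw [show (1:ℝ) = Real.exp 0 from (Real.exp_zero).symm]
        exact Real.exp_le_exp.mpr (by norm_num)
      have h5 : 0 ≤ u 0 * Real.exp (-(t/2)) :=
        mul_nonneg hu0.le (Real.exp_nonneg _)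
      nlinarith
    · push_neg at hcase
      have h1 : u t ≤ u (T - 101) :=
        huanti (⟨hT101, by linarith⟩ : T - 101 ∈ Icc (0:ℝ) T) ht (by linarith)
      have h2 := hdecay1 (T - 101) ⟨hT101, le_refl _⟩
      have h3 : u (T - 101) ≤ u 0 * Real.exp (-((T - 101)/2)) := by
        rw [Real.exp_neg, ← div_eq_mul_inv, le_div_iff₀ (Real.exp_pos _)]
        exact h2
      have h4 : Real.exp (-((T - 101)/2)) ≤ Real.exp 51 * Real.exp (-(t/2)) := by
        rw [← Real.exp_add]
        apply Real.exp_le_exp.mpr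
        have : t ≤ T := ht.2
        linarith
      calc u t ≤ u 0 * Real.exp (-((T - 101)/2)) := le_trans h1 h3
        _ ≤ u 0 * (Real.exp 51 * Real.exp (-(t/2))) :=
            mul_le_mul_of_nonneg_left h4 hu0.le
        _ = u 0 * Real.exp 51 * Real.exp (-(t/2)) := by ring
  -- lower pointwise bound near 0
  have hlow : ∀ t ∈ Icc (0:ℝ) (1/5), 0 ≤ deriv u t + 2 * u t := by
    apply barrier_ge_far (c := u 0) (m := (121/30) * u 0)
      (G := fun t => deriv (deriv u) t + 2 * deriv u t)
    · exact fun t ht => ((hd2 t).hasDerivAt).add (((hd1 t).hasDerivAt).const_mul 2)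
    · show u 0 ≤ deriv u 0 + 2 * u 0
      rw [hRob]; linarith
    · exact hu0
    · positivity
    · intro t ht hist
      have htT : t ∈ Icc (0:ℝ) T := ⟨ht.1, by linarith [ht.2]⟩
      have hx : 0 ≤ u t := hunn t htT
      have hxu0 : u t ≤ u 0 := huanti (⟨le_refl 0, hT0.le⟩ : (0:ℝ) ∈ Icc (0:ℝ) T) htT ht.1
      have hu'1 : -(2 * u t) ≤ deriv u t := by
        have := hist t ⟨ht.1, le_refl t⟩
        linarith
      have hu'2 : deriv u t ≤ 0 := (hu'neg t ⟨ht.1, by linarith [ht.2]⟩).le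
      obtain ⟨e, he⟩ : ∃ e : ℝ, e = B * (1 - B*t)⁻¹ := ⟨_, rfl⟩
      have heb : |e| ≤ 1/600 := he ▸ hBw t htT
      have he1 : -(1/600) ≤ e := by linarith [(abs_le.1 heb).1]
      have he2 : e ≤ 1/600 := (abs_le.1 heb).2
      show -((121/30) * u 0) ≤ deriv (deriv u) t + 2 * deriv u t
      rw [hu'' t htT, ← he]
      have hlamu : 0 ≤ -lam * u t := mul_nonneg (by linarith) hx
      have hb1 : -(1/600) * (2 * u 0) ≤ e * deriv u t := by
        rcases le_or_gt 0 e with h | h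
        · nlinarith
        · nlinarith
      nlinarith
    · nlinarith
  -- hence u ≥ u 0 * exp(-2/5) on [0, 1/5]
  have hulow : ∀ t ∈ Icc (0:ℝ) (1/5), u 0 * Real.exp (-(2/5)) ≤ u t := by
    have hGder : ∀ x : ℝ, HasDerivAt (fun t => u t * Real.exp (2*t))
        ((deriv u x + 2 * u x) * Real.exp (2*x)) x := by
      intro x
      have h1 : HasDerivAt (fun t : ℝ => Real.exp (2*t)) (Real.exp (2*x) * 2) x := by
        have h2 : HasDerivAt (fun t : ℝ => 2*t) 2 x := by
          simpa using (hasDerivAt_id x).const_mul 2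
        exact (Real.hasDerivAt_exp (2*x)).comp x h2
      exact (((hd1 x).hasDerivAt).mul h1).congr_deriv (by ring)
    have hmono : MonotoneOn (fun t => u t * Real.exp (2*t)) (Icc (0:ℝ) (1/5)) := by
      apply monotoneOn_of_deriv_nonneg (convex_Icc _ _)
      · exact (hcont.mul (Real.continuous_exp.comp (continuous_const.mul continuous_id))).continuousOn
      · intro x hx
        exact ((hGder x).differentiableAt).differentiableWithinAt
      · intro x hx
        rw [interior_Icc] at hx
        rw [(hGder x).deriv]
        have h1 := hlow x (Ioo_subset_Icc_self hx)
        have h2 := Real.exp_pos (2*x)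
        nlinarith
    intro t ht
    have h1 := hmono (⟨le_refl 0, by norm_num⟩ : (0:ℝ) ∈ Icc (0:ℝ) (1/5)) ht ht.1
    simp only [mul_zero, Real.exp_zero, mul_one] at h1
    -- u 0 ≤ u t * exp (2t)
    have h2 : u 0 * Real.exp (-(2*t)) ≤ u t := by
      rw [Real.exp_neg, ← div_eq_mul_inv, div_le_iff₀ (Real.exp_pos _)]
      exact h1
    have h3 : Real.exp (-(2/5)) ≤ Real.exp (-(2*t)) :=
      Real.exp_le_exp.mpr (by linarith [ht.2])
    calc u 0 * Real.exp (-(2/5)) ≤ u 0 * Real.exp (-(2*t)) :=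
          mul_le_mul_of_nonneg_left h3 hu0.le
      _ ≤ u t := h2
  -- normalization bounds u 0
  have hcw : Continuous (fun τ : ℝ => u τ^2 * (1 - B*τ)) :=
    ((hcont.pow 2).mul (continuous_const.sub (continuous_const.mul continuous_id)))
  have hint1 : IntervalIntegrable (fun τ : ℝ => u τ^2 * (1 - B*τ)) volume 0 (1/5) :=
    hcw.intervalIntegrable _ _
  have hint2 : IntervalIntegrable (fun τ : ℝ => u τ^2 * (1 - B*τ)) volume (1/5) T :=
    hcw.intervalIntegrable _ _
  have hT15 : (1/5:ℝ) ≤ T := by linarith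
  have hsplit := intervalIntegral.integral_add_adjacent_intervals hint1 hint2
  have hpos2 : 0 ≤ ∫ τ in (1/5:ℝ)..T, u τ^2 * (1 - B*τ) := by
    apply intervalIntegral.integral_nonneg hT15
    intro x hx
    have hxT : x ∈ Icc (0:ℝ) T := ⟨by linarith [hx.1], hx.2⟩
    have := hwlb x hxT
    have := sq_nonneg (u x)
    nlinarith
  have hconst : ∀ x ∈ Icc (0:ℝ) (1/5:ℝ),
      (u 0 * Real.exp (-(2/5)))^2 * (2/3) ≤ u x^2 * (1 - B*x) := by
    intro x hx
    have hxT : x ∈ Icc (0:ℝ) T := ⟨hx.1, by linarith [hx.2]⟩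
    have h1 : (u 0 * Real.exp (-(2/5)))^2 ≤ u x^2 :=
      pow_le_pow_left₀ (mul_nonneg hu0.le (Real.exp_nonneg _)) (hulow x hx) 2
    have h2 := hwlb x hxT
    exact mul_le_mul h1 h2 (by norm_num) (sq_nonneg _)
  have hlowint : ((1/5:ℝ) - 0) • ((u 0 * Real.exp (-(2/5)))^2 * (2/3))
      ≤ ∫ τ in (0:ℝ)..(1/5), u τ^2 * (1 - B*τ) := by
    rw [← intervalIntegral.integral_const]
    exact intervalIntegral.integral_mono_on (by norm_num)
      (intervalIntegrable_const) hint1 hconst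
  have hu0sq : u 0^2 ≤ 21 := by
    have h1 : ((1/5:ℝ) - 0) • ((u 0 * Real.exp (-(2/5)))^2 * (2/3)) ≤ 1 := by
      rw [hnorm] at hsplit
      calc ((1/5:ℝ) - 0) • ((u 0 * Real.exp (-(2/5)))^2 * (2/3))
          ≤ ∫ τ in (0:ℝ)..(1/5), u τ^2 * (1 - B*τ) := hlowint
        _ ≤ 1 := by linarith
    have hE2 : Real.exp (-(2/5))^2 = Real.exp (-(4/5)) := by
      rw [sq, ← Real.exp_add]; norm_num
    have hEb : (5:ℝ)/14 ≤ Real.exp (-(4/5)) := by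
      have h2 : Real.exp (4/5) ≤ 14/5 := by
        have h3 : Real.exp (4/5) ≤ Real.exp 1 := Real.exp_le_exp.mpr (by norm_num)
        have h4 := Real.exp_one_lt_d9
        linarith
      rw [Real.exp_neg]
      rw [show (5:ℝ)/14 = ((14:ℝ)/5)⁻¹ by norm_num]
      exact inv_anti₀ (Real.exp_pos _) h2
    rw [smul_eq_mul, mul_pow, hE2] at h1
    nlinarith [sq_nonneg (u 0), mul_le_mul_of_nonneg_left hEb (sq_nonneg (u 0))]
  -- final integral bound
  have hintg : Continuous (fun τ : ℝ => Real.exp (2*(1/4)*τ) * u τ^2 * (1 - B*τ)) := by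
    exact ((Real.continuous_exp.comp (continuous_const.mul continuous_id)).mul
      (hcont.pow 2)).mul (continuous_const.sub (continuous_const.mul continuous_id))
  have hintd : Continuous (fun τ : ℝ => 28 * Real.exp 102 * Real.exp (-(τ/2))) := by
    exact continuous_const.mul (Real.continuous_exp.comp ((continuous_id.div_const 2).neg))
  have hptw : ∀ τ ∈ Icc (0:ℝ) T,
      Real.exp (2*(1/4)*τ) * u τ^2 * (1 - B*τ) ≤ 28 * Real.exp 102 * Real.exp (-(τ/2)) := by
    intro τ hτ
    have h1 : u τ^2 ≤ (u 0 * Real.exp 51 * Real.exp (-(τ/2)))^2 :=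
      pow_le_pow_left₀ (hunn τ hτ) (hdecay τ hτ) 2
    have h2 := hwub τ hτ
    have h3 := hwlb τ hτ
    have h4 : (0:ℝ) ≤ Real.exp (2*(1/4)*τ) := (Real.exp_pos _).le
    have hexp : Real.exp (2*(1/4)*τ) * (Real.exp 51)^2 * (Real.exp (-(τ/2)))^2
        = Real.exp 102 * Real.exp (-(τ/2)) := by
      simp only [sq, ← Real.exp_add]
      congr 1
      ring
    calc Real.exp (2*(1/4)*τ) * u τ^2 * (1 - B*τ)
        ≤ Real.exp (2*(1/4)*τ) * u τ^2 * (4/3) :=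
          mul_le_mul_of_nonneg_left h2 (mul_nonneg h4 (sq_nonneg _))
      _ ≤ Real.exp (2*(1/4)*τ) * (u 0 * Real.exp 51 * Real.exp (-(τ/2)))^2 * (4/3) :=
          mul_le_mul_of_nonneg_right (mul_le_mul_of_nonneg_left h1 h4) (by norm_num)
      _ = (4/3) * u 0^2 * (Real.exp (2*(1/4)*τ) * (Real.exp 51)^2 * (Real.exp (-(τ/2)))^2) := by
          ring
      _ = (4/3) * u 0^2 * (Real.exp 102 * Real.exp (-(τ/2))) := by rw [hexp]
      _ ≤ (4/3) * 21 * (Real.exp 102 * Real.exp (-(τ/2))) := by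
          have h5 : (0:ℝ) ≤ Real.exp 102 * Real.exp (-(τ/2)) :=
            mul_nonneg (Real.exp_nonneg _) (Real.exp_nonneg _)
          nlinarith
      _ = 28 * Real.exp 102 * Real.exp (-(τ/2)) := by ring
  have hJle : (∫ τ in (0:ℝ)..T, Real.exp (2*(1/4)*τ) * u τ^2 * (1 - B*τ))
      ≤ ∫ τ in (0:ℝ)..T, 28 * Real.exp 102 * Real.exp (-(τ/2)) :=
    intervalIntegral.integral_mono_on hT0.le (hintg.intervalIntegrable _ _)
      (hintd.intervalIntegrable _ _) hptw
  have hFTC : (∫ τ in (0:ℝ)..T, 28 * Real.exp 102 * Real.exp (-(τ/2)))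
      = (-56 * Real.exp 102 * Real.exp (-(T/2))) - (-56 * Real.exp 102 * Real.exp (-(0/2))) := by
    apply intervalIntegral.integral_eq_sub_of_hasDerivAt
    · intro x _
      have h1 : HasDerivAt (fun t : ℝ => -(t/2)) (-(1/2)) x := by
        exact ((hasDerivAt_id x).div_const 2).neg
      have h2 := (Real.hasDerivAt_exp (-(x/2))).comp x h1
      exact (h2.const_mul (-56 * Real.exp 102)).congr_deriv (by ring)
    · exact hintd.intervalIntegrable _ _
  have hJ2 : (∫ τ in (0:ℝ)..T, Real.exp (2*(1/4)*τ) * u τ^2 * (1 - B*τ)) ≤ 56 * Real.exp 102 := by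
    rw [hFTC] at hJle
    have h1 : (0:ℝ) ≤ Real.exp 102 * Real.exp (-(T/2)) :=
      mul_nonneg (Real.exp_nonneg _) (Real.exp_nonneg _)
    have h2 : Real.exp (-(0/2) : ℝ) = 1 := by norm_num
    rw [h2] at hJle
    nlinarith
  have hfin : (∫ τ in (0:ℝ)..T, Real.exp (2*(1/4)*τ) * u τ^2 * (1 - B*τ)) ≤ (Real.exp 60)^2 := by
    have h1 : (10:ℝ) ≤ Real.exp 9 := by nlinarith [Real.add_one_le_exp (9:ℝ)]
    have h2 : (56:ℝ) ≤ Real.exp 18 := by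
      rw [show (18:ℝ) = 9 + 9 by norm_num, Real.exp_add]
      nlinarith
    have h3 : (Real.exp 60)^2 = Real.exp 102 * Real.exp 18 := by
      rw [sq, ← Real.exp_add, ← Real.exp_add]
      norm_num
    rw [h3]
    have h4 := (Real.exp_pos (102:ℝ)).le
    nlinarith [Real.exp_pos (102:ℝ)]
  calc Real.sqrt (∫ τ in (0:ℝ)..T, Real.exp (2*(1/4)*τ) * u τ^2 * (1 - B*τ))
      ≤ Real.sqrt ((Real.exp 60)^2) := Real.sqrt_le_sqrt hfin
    _ = Real.exp 60 := Real.sqrt_sq (Real.exp_nonneg _)
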